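/- Let A be a μ×μ real symmetric matrix that is negative definite, has nonnegative off-diagonal entries (A_{ij} ≥ 0 for all i ≠ j), and is irreducible. Then A has an eigenvector a = (a_1, …, a_μ) all of whose entries are strictly positive (a_i > 0 for all i), and the corresponding eigenvalue α is strictly negative. -/

import Mathlib

open Matrix BigOperators

/-- A real symmetric negative definite matrix with nonnegative
off-diagonal entries which is irreducible (the graph with edges `A i j ≠ 0`
is connected) has a strictly positive eigenvector, with strictly negative
eigenvalue. -/
theorem exists_positive_eigenvector_of_negDef_irreducible
    {μ : ℕ} (hμ : 1 ≤ μ) (A : Matrix (Fin μ) (Fin μ) ℝ)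
    (hsymm : A.IsSymm)
    (hneg : ∀ v : Fin μ → ℝ, v ≠ 0 → v ⬝ᵥ A.mulVec v < 0)
    (hoff : ∀ i j : Fin μ, i ≠ j → 0 ≤ A i j)
    (hirr : (SimpleGraph.fromRel (fun i j : Fin μ => A i j ≠ 0)).Connected) :
    ∃ (a : Fin μ → ℝ) (α : ℝ), (∀ i, 0 < a i) ∧ α < 0 ∧ A.mulVec a = α • a := by
  classical
  set T : EuclideanSpace ℝ (Fin μ) →L[ℝ] EuclideanSpace ℝ (Fin μ) :=
    LinearMap.toContinuousLinearMap (Matrix.toEuclideanLin A) with hTdef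
  have hherm : A.IsHermitian := by
    exact Matrix.IsHermitian.ext fun i j => by simpa using hsymm.apply i j
  have hT : IsSelfAdjoint T := by
    rw [ContinuousLinearMap.isSelfAdjoint_iff_isSymmetric]
    exact Matrix.isHermitian_iff_isSymmetric.mp hherm
  have hf : ∀ x : EuclideanSpace ℝ (Fin μ), T.reApplyInnerSelf x = (A.mulVec x) ⬝ᵥ x := by
    intro x
    rw [ContinuousLinearMap.reApplyInnerSelf_apply]
    simp [hTdef, PiLp.inner_apply, Matrix.toEuclideanLin_apply, dotProduct, mul_comm]
  -- maximizer of the quadratic form on the unit sphere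
  have hsph : (Metric.sphere (0 : EuclideanSpace ℝ (Fin μ)) 1).Nonempty :=
    ⟨EuclideanSpace.single ⟨0, hμ⟩ (1 : ℝ), by
      rw [mem_sphere_zero_iff_norm, EuclideanSpace.norm_single, norm_one]⟩
  obtain ⟨x₀, hx₀s, hmax⟩ := (isCompact_sphere (0 : EuclideanSpace ℝ (Fin μ)) 1).exists_isMaxOn hsph
    T.reApplyInnerSelf_continuous.continuousOn
  have hx₀n : ‖x₀‖ = 1 := by simpa using hx₀s
  set a : Fin μ → ℝ := fun i => |x₀ i| with ha
  set y : EuclideanSpace ℝ (Fin μ) := (WithLp.equiv 2 (Fin μ → ℝ)).symm a with hy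
  have hyi : ∀ i, y i = a i := fun i => rfl
  have hnorm : ‖y‖ = 1 := by
    rw [EuclideanSpace.norm_eq] at hx₀n ⊢
    rw [← hx₀n]
    congr 1
    refine Finset.sum_congr rfl fun i _ => ?_
    have h : y i = |x₀ i| := rfl
    rw [h, Real.norm_eq_abs, Real.norm_eq_abs, abs_abs]
  have hy0 : y ≠ 0 := by
    intro h; rw [h, norm_zero] at hnorm; norm_num at hnorm
  have hane : a ≠ 0 := by
    intro h
    exact hy0 (by rw [hy, h]; rfl)
  have hanonneg : ∀ i, 0 ≤ a i := fun i => abs_nonneg _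
  -- replacing entries by absolute values does not decrease the quadratic form
  have hfle : T.reApplyInnerSelf x₀ ≤ T.reApplyInnerSelf y := by
    rw [hf, hf]
    have hyv : ((WithLp.equiv 2 (Fin μ → ℝ)) y : Fin μ → ℝ) = a := rfl
    simp only [dotProduct, mulVec, Finset.sum_mul]
    refine Finset.sum_le_sum fun i _ => Finset.sum_le_sum fun j _ => ?_
    rw [hyi]
    show A i j * (x₀ j) * (x₀ i) ≤ A i j * a j * a i
    rcases eq_or_ne i j with rfl | hij
    · rw [mul_assoc, mul_assoc, abs_mul_abs_self]
    · have h1 : x₀ j * x₀ i ≤ a j * a i := by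
        calc x₀ j * x₀ i ≤ |x₀ j * x₀ i| := le_abs_self _
        _ = a j * a i := abs_mul _ _
      calc A i j * x₀ j * x₀ i = A i j * (x₀ j * x₀ i) := by ring
      _ ≤ A i j * (a j * a i) := mul_le_mul_of_nonneg_left h1 (hoff i j hij)
      _ = A i j * a j * a i := by ring
  have hmaxy : IsMaxOn T.reApplyInnerSelf (Metric.sphere (0 : EuclideanSpace ℝ (Fin μ)) ‖y‖) y := by
    intro z hz
    rw [hnorm] at hz
    exact le_trans (hmax hz) hfle
  have hev := hT.hasEigenvector_of_isMaxOn hy0 hmaxy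
  set c : ℝ := ⨆ x : { x : EuclideanSpace ℝ (Fin μ) // x ≠ 0 }, T.rayleighQuotient x with hc
  have heig : Matrix.toEuclideanLin A y = c • y := by
    have := hev.apply_eq_smul
    simpa [hTdef] using this
  have heq : A.mulVec a = c • a := by
    funext i
    have h2 := congrArg (fun z : EuclideanSpace ℝ (Fin μ) => z i) heig
    simp only at h2
    calc A.mulVec a i = (Matrix.toEuclideanLin A y) i := rfl
    _ = (c • y) i := by rw [heig]
    _ = c * a i := rfl
  -- the eigenvalue is negative
  have hdp : a ⬝ᵥ A.mulVec a = c * (a ⬝ᵥ a) := by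
    rw [heq, dotProduct_smul]; rfl
  have hapos : 0 < a ⬝ᵥ a := by
    obtain ⟨k, hk⟩ := Function.ne_iff.mp hane
    refine Finset.sum_pos' (fun i _ => mul_self_nonneg _) ⟨k, Finset.mem_univ k, ?_⟩
    exact mul_self_pos.mpr hk
  have hcneg : c < 0 := by
    have h3 : c * (a ⬝ᵥ a) < 0 := hdp ▸ hneg a hane
    by_contra h
    push_neg at h
    nlinarith
  -- positivity of entries via irreducibility
  set G := SimpleGraph.fromRel (fun i j : Fin μ => A i j ≠ 0) with hG
  have hprop : ∀ i j : Fin μ, a i = 0 → G.Adj i j → a j = 0 := by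
    intro i j hai hadj
    rw [SimpleGraph.fromRel_adj] at hadj
    obtain ⟨hij, hA⟩ := hadj
    have hAij : A i j ≠ 0 := by
      rcases hA with h | h
      · exact h
      · rw [← hsymm.apply i j]; exact h
    have hAi : A.mulVec a i = 0 := by rw [heq]; simp [hai]
    have hsum : ∑ k ∈ Finset.univ.erase i, A i k * a k = 0 := by
      have h4 : ∑ k ∈ Finset.univ.erase i, A i k * a k + A i i * a i
          = ∑ k, A i k * a k := Finset.sum_erase_add _ _ (Finset.mem_univ i)
      have h5 : ∑ k, A i k * a k = 0 := hAi
      rw [hai, mul_zero, add_zero] at h4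
      rw [h4, h5]
    have h6 := (Finset.sum_eq_zero_iff_of_nonneg fun k hk => by
      have hki : k ≠ i := (Finset.mem_erase.mp hk).1
      exact mul_nonneg (hoff i k (Ne.symm hki)) (hanonneg k)).mp hsum
    have h7 : A i j * a j = 0 := h6 j (Finset.mem_erase.mpr ⟨hij.symm, Finset.mem_univ j⟩)
    rcases mul_eq_zero.mp h7 with h | h
    · exact absurd h hAij
    · exact h
  have hwalk : ∀ {i j : Fin μ} (_ : G.Walk i j), a i = 0 → a j = 0 := by
    intro i j p
    induction p with
    | nil => exact id
    | cons h _ ih => exact fun h0 => ih (hprop _ _ h0 h)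
  have hne0 : ∀ i, a i ≠ 0 := by
    intro i hi
    apply hane
    funext j
    obtain ⟨p⟩ := hirr.preconnected i j
    exact hwalk p hi
  exact ⟨a, c, fun i => lt_of_le_of_ne (hanonneg i) (Ne.symm (hne0 i)), hcneg, heq⟩
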